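/- arXiv:1701.00204 — 2 statements merged into one kernel-verified Lean document; each statement's English description precedes it below -/
import Mathlib

section
/- Let w ∈ S_n be vexillary with associated partition λ(w) of length r, and let f(w) = {(p_i, q_i) : i = 1,…,d} be a flagging set of w. Then λ_i = q_i - p_i + i for each i = 1,…,d (where λ_i = 0 for i > r). -/
/-- The rank function `r_w(p,q) = #{ i ≤ p : w(i) ≤ q }` in 1-based coordinates. -/
def rk {n : ℕ} (w : Equiv.Perm (Fin n)) (p q : ℕ) : ℕ :=
  (Finset.univ.filter fun i : Fin n => (i : ℕ) < p ∧ ((w i : Fin n) : ℕ) < q).card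

/-- The essential set `Ess(w)` in 0-based coordinates. -/
def InEssentialSet {n : ℕ} (w : Equiv.Perm (Fin n)) (p q : Fin n) : Prop :=
  ∃ (hp : (p : ℕ) + 1 < n) (hq : (q : ℕ) + 1 < n),
    (q : ℕ) < ((w p : Fin n) : ℕ) ∧
    ((w ⟨(p : ℕ) + 1, hp⟩ : Fin n) : ℕ) ≤ (q : ℕ) ∧
    (p : ℕ) < ((w.symm q : Fin n) : ℕ) ∧
    ((w.symm ⟨(q : ℕ) + 1, hq⟩ : Fin n) : ℕ) ≤ (p : ℕ)

namespace FlaggingAux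

/-- Box of the Rothe diagram, 0-based coordinates. -/
def BoxP {n : ℕ} (w : Equiv.Perm (Fin n)) (x y : ℕ) : Prop :=
  ∃ i j : Fin n, (i : ℕ) = x ∧ (j : ℕ) = y ∧
    y < ((w i : Fin n) : ℕ) ∧ x < ((w.symm j : Fin n) : ℕ)

/-- "Antibox" (a rank jump of 2 on the diagonal), 0-based coordinates. -/
def AntiP {n : ℕ} (w : Equiv.Perm (Fin n)) (x y : ℕ) : Prop :=
  ∃ i j : Fin n, (i : ℕ) = x ∧ (j : ℕ) = y ∧
    ((w i : Fin n) : ℕ) ≤ y ∧ ((w.symm j : Fin n) : ℕ) < x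

instance {n : ℕ} (w : Equiv.Perm (Fin n)) (x y : ℕ) : Decidable (BoxP w x y) := by
  unfold BoxP; infer_instance

instance {n : ℕ} (w : Equiv.Perm (Fin n)) (x y : ℕ) : Decidable (AntiP w x y) := by
  unfold AntiP; infer_instance

variable {n : ℕ} (w : Equiv.Perm (Fin n))

lemma boxP_iff {x y : ℕ} (hx : x < n) (hy : y < n) :
    BoxP w x y ↔ y < ((w ⟨x, hx⟩ : Fin n) : ℕ) ∧ x < ((w.symm ⟨y, hy⟩ : Fin n) : ℕ) := by
  constructor
  · rintro ⟨i, j, hi, hj, h1, h2⟩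
    have e1 : i = ⟨x, hx⟩ := Fin.ext hi
    have e2 : j = ⟨y, hy⟩ := Fin.ext hj
    subst e1; subst e2
    exact ⟨h1, h2⟩
  · rintro ⟨h1, h2⟩
    exact ⟨⟨x, hx⟩, ⟨y, hy⟩, rfl, rfl, h1, h2⟩

lemma antiP_iff {x y : ℕ} (hx : x < n) (hy : y < n) :
    AntiP w x y ↔ ((w ⟨x, hx⟩ : Fin n) : ℕ) ≤ y ∧ ((w.symm ⟨y, hy⟩ : Fin n) : ℕ) < x := by
  constructor
  · rintro ⟨i, j, hi, hj, h1, h2⟩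
    have e1 : i = ⟨x, hx⟩ := Fin.ext hi
    have e2 : j = ⟨y, hy⟩ := Fin.ext hj
    subst e1; subst e2
    exact ⟨h1, h2⟩
  · rintro ⟨h1, h2⟩
    exact ⟨⟨x, hx⟩, ⟨y, hy⟩, rfl, rfl, h1, h2⟩

lemma box_not_anti {x y : ℕ} (h : BoxP w x y) (h' : AntiP w x y) : False := by
  obtain ⟨i, j, hi, hj, h1, h2⟩ := h
  obtain ⟨i', j', hi', hj', h3, h4⟩ := h'
  have e : i' = i := Fin.ext (by omega)
  subst e
  omega

lemma rk_mono_left {p p' : ℕ} (q : ℕ) (h : p ≤ p') : rk w p q ≤ rk w p' q := by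
  apply Finset.card_le_card
  intro x hx
  simp only [Finset.mem_filter, Finset.mem_univ, true_and] at hx ⊢
  exact ⟨lt_of_lt_of_le hx.1 h, hx.2⟩

lemma rk_mono_right (p : ℕ) {q q' : ℕ} (h : q ≤ q') : rk w p q ≤ rk w p q' := by
  apply Finset.card_le_card
  intro x hx
  simp only [Finset.mem_filter, Finset.mem_univ, true_and] at hx ⊢
  exact ⟨hx.1, lt_of_lt_of_le hx.2 h⟩

lemma rk_le_right (p q : ℕ) : rk w p q ≤ q := by
  have h : ((Finset.univ.filter fun i : Fin n =>
      (i : ℕ) < p ∧ ((w i : Fin n) : ℕ) < q)).card ≤ (Finset.range q).card := by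
    apply Finset.card_le_card_of_injOn (fun i => ((w i : Fin n) : ℕ))
    · intro i hi
      simp only [Finset.mem_coe, Finset.mem_filter, Finset.mem_univ, true_and] at hi
      simpa using hi.2
    · intro a _ b _ hab
      exact w.injective (Fin.ext hab)
  simpa [rk] using h

lemma rk_right_sub (p : ℕ) {q q' : ℕ} (h : q ≤ q') : rk w p q' ≤ rk w p q + (q' - q) := by
  have hsub : (Finset.univ.filter fun i : Fin n => (i : ℕ) < p ∧ ((w i : Fin n) : ℕ) < q')
      ⊆ (Finset.univ.filter fun i : Fin n => (i : ℕ) < p ∧ ((w i : Fin n) : ℕ) < q)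
        ∪ (Finset.univ.filter fun i : Fin n =>
            q ≤ ((w i : Fin n) : ℕ) ∧ ((w i : Fin n) : ℕ) < q') := by
    intro x hx
    simp only [Finset.mem_filter, Finset.mem_univ, true_and, Finset.mem_union] at hx ⊢
    omega
  have h2 : ((Finset.univ.filter fun i : Fin n =>
      q ≤ ((w i : Fin n) : ℕ) ∧ ((w i : Fin n) : ℕ) < q')).card ≤ q' - q := by
    have := Finset.card_le_card_of_injOn (fun i : Fin n => ((w i : Fin n) : ℕ))
      (s := Finset.univ.filter fun i : Fin n =>
        q ≤ ((w i : Fin n) : ℕ) ∧ ((w i : Fin n) : ℕ) < q')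
      (t := Finset.Ico q q')
      (by intro i hi
          simp only [Finset.mem_coe, Finset.mem_filter, Finset.mem_univ, true_and] at hi
          simp only [Finset.mem_coe, Finset.mem_Ico]
          exact hi)
      (by intro a _ b _ hab; exact w.injective (Fin.ext hab))
    simpa [Nat.card_Ico] using this
  calc rk w p q' ≤ _ := Finset.card_le_card hsub
    _ ≤ _ + _ := Finset.card_union_le _ _
    _ ≤ rk w p q + (q' - q) := by exact Nat.add_le_add_left h2 _

lemma rk_zero (u v : ℕ) (huv : u = 0 ∨ v = 0) : rk w u v = 0 := by
  unfold rk
  rw [Finset.card_eq_zero, Finset.filter_eq_empty_iff]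
  intro x _
  rcases huv with rfl | rfl <;> omega

lemma rk_succ_left {p : ℕ} (hp : p < n) (q : ℕ) :
    rk w (p + 1) q = rk w p q + if ((w ⟨p, hp⟩ : Fin n) : ℕ) < q then 1 else 0 := by
  unfold rk
  have hset : (Finset.univ.filter fun i : Fin n => (i : ℕ) < p + 1 ∧ ((w i : Fin n) : ℕ) < q)
      = (Finset.univ.filter fun i : Fin n => (i : ℕ) < p ∧ ((w i : Fin n) : ℕ) < q)
        ∪ (Finset.univ.filter fun i : Fin n => i = ⟨p, hp⟩ ∧ ((w i : Fin n) : ℕ) < q) := by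
    ext x
    simp only [Finset.mem_filter, Finset.mem_univ, true_and, Finset.mem_union, Fin.ext_iff]
    omega
  rw [hset, Finset.card_union_of_disjoint]
  · congr 1
    by_cases hwq : ((w ⟨p, hp⟩ : Fin n) : ℕ) < q
    · rw [if_pos hwq]
      have hs : (Finset.univ.filter fun i : Fin n => i = ⟨p, hp⟩ ∧ ((w i : Fin n) : ℕ) < q)
          = {(⟨p, hp⟩ : Fin n)} := by
        ext x
        simp only [Finset.mem_filter, Finset.mem_univ, true_and, Finset.mem_singleton]
        constructor
        · exact fun h => h.1
        · rintro rfl; exact ⟨rfl, hwq⟩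
      rw [hs, Finset.card_singleton]
    · rw [if_neg hwq]
      have hs : (Finset.univ.filter fun i : Fin n => i = ⟨p, hp⟩ ∧ ((w i : Fin n) : ℕ) < q)
          = ∅ := by
        rw [Finset.filter_eq_empty_iff]
        rintro x _ ⟨rfl, h⟩
        exact hwq h
      rw [hs, Finset.card_empty]
  · rw [Finset.disjoint_left]
    rintro x hx hx'
    simp only [Finset.mem_filter, Finset.mem_univ, true_and, Fin.ext_iff] at hx hx'
    omega

lemma rk_succ_right {q : ℕ} (hq : q < n) (p : ℕ) :
    rk w p (q + 1) = rk w p q + if ((w.symm ⟨q, hq⟩ : Fin n) : ℕ) < p then 1 else 0 := by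
  unfold rk
  have hset : (Finset.univ.filter fun i : Fin n => (i : ℕ) < p ∧ ((w i : Fin n) : ℕ) < q + 1)
      = (Finset.univ.filter fun i : Fin n => (i : ℕ) < p ∧ ((w i : Fin n) : ℕ) < q)
        ∪ (Finset.univ.filter fun i : Fin n =>
            ((w i : Fin n) : ℕ) = q ∧ (i : ℕ) < p) := by
    ext x
    simp only [Finset.mem_filter, Finset.mem_univ, true_and, Finset.mem_union]
    omega
  rw [hset, Finset.card_union_of_disjoint]
  · congr 1
    have key : ∀ x : Fin n, ((w x : Fin n) : ℕ) = q ↔ x = w.symm ⟨q, hq⟩ := by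
      intro x
      constructor
      · intro h
        have h' : w x = ⟨q, hq⟩ := Fin.ext h
        exact (Equiv.eq_symm_apply w).mpr h'
      · rintro rfl
        simp
    by_cases hc : ((w.symm ⟨q, hq⟩ : Fin n) : ℕ) < p
    · rw [if_pos hc]
      have hs : (Finset.univ.filter fun i : Fin n => ((w i : Fin n) : ℕ) = q ∧ (i : ℕ) < p)
          = {w.symm ⟨q, hq⟩} := by
        ext x
        simp only [Finset.mem_filter, Finset.mem_univ, true_and, Finset.mem_singleton]
        constructor
        · rintro ⟨h1, _⟩
          exact (key x).mp h1
        · rintro rfl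
          exact ⟨by simp, hc⟩
      rw [hs, Finset.card_singleton]
    · rw [if_neg hc]
      have hs : (Finset.univ.filter fun i : Fin n => ((w i : Fin n) : ℕ) = q ∧ (i : ℕ) < p)
          = ∅ := by
        rw [Finset.filter_eq_empty_iff]
        rintro x _ ⟨h1, h2⟩
        rw [key x] at h1
        subst h1
        exact hc h2
      rw [hs, Finset.card_empty]
  · rw [Finset.disjoint_left]
    rintro x hx hx'
    simp only [Finset.mem_filter, Finset.mem_univ, true_and] at hx hx'
    omega

/-- The rank along the diagonal changes by 0 (a box), 2 (an antibox) or 1. -/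
lemma step_tri (x y : ℕ) (hx : x < n) (hy : y < n) :
    (BoxP w x y ∧ rk w (x + 1) (y + 1) = rk w x y) ∨
    (AntiP w x y ∧ rk w (x + 1) (y + 1) = rk w x y + 2) ∨
    (¬ BoxP w x y ∧ rk w (x + 1) (y + 1) = rk w x y + 1) := by
  have h1 := rk_succ_left w hx (y + 1)
  have h2 := rk_succ_right w hy x
  by_cases hA : ((w ⟨x, hx⟩ : Fin n) : ℕ) ≤ y
  · by_cases hB : ((w.symm ⟨y, hy⟩ : Fin n) : ℕ) < x
    · right; left
      refine ⟨(antiP_iff w hx hy).mpr ⟨hA, hB⟩, ?_⟩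
      rw [h1, h2, if_pos hB, if_pos (show ((w ⟨x, hx⟩ : Fin n) : ℕ) < y + 1 by omega)]
    · right; right
      refine ⟨fun hbox => ?_, ?_⟩
      · obtain ⟨hc1, hc2⟩ := (boxP_iff w hx hy).mp hbox
        omega
      · rw [h1, h2, if_neg hB, if_pos (show ((w ⟨x, hx⟩ : Fin n) : ℕ) < y + 1 by omega)]
  · push_neg at hA
    by_cases hB : ((w.symm ⟨y, hy⟩ : Fin n) : ℕ) < x
    · right; right
      refine ⟨fun hbox => ?_, ?_⟩
      · obtain ⟨hc1, hc2⟩ := (boxP_iff w hx hy).mp hbox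
        omega
      · rw [h1, h2, if_pos hB,
          if_neg (show ¬ ((w ⟨x, hx⟩ : Fin n) : ℕ) < y + 1 by omega)]
    · left
      have hne : ((w.symm ⟨y, hy⟩ : Fin n) : ℕ) ≠ x := by
        intro h
        have e : w.symm ⟨y, hy⟩ = ⟨x, hx⟩ := Fin.ext h
        have e2 : (⟨y, hy⟩ : Fin n) = w ⟨x, hx⟩ := by rw [← e, Equiv.apply_symm_apply]
        have : y = ((w ⟨x, hx⟩ : Fin n) : ℕ) := by rw [← e2]
        omega
      refine ⟨(boxP_iff w hx hy).mpr ⟨hA, by omega⟩, ?_⟩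
      rw [h1, h2, if_neg hB,
        if_neg (show ¬ ((w ⟨x, hx⟩ : Fin n) : ℕ) < y + 1 by omega)]
      omega

/-- Vexillary: no antibox strictly northwest of a box. -/
lemma no_anti_box
    (hvex : ¬ ∃ a b c d : Fin n, a < b ∧ b < c ∧ c < d ∧
        w b < w a ∧ w a < w d ∧ w d < w c)
    {x y x' y' : ℕ} (hxx : x < x') (hyy : y < y')
    (h1 : AntiP w x y) (h2 : BoxP w x' y') : False := by
  obtain ⟨iA, jA, hiA, hjA, hA1, hA2⟩ := h1
  obtain ⟨iB, jB, hiB, hjB, hB1, hB2⟩ := h2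
  apply hvex
  have hne : ((w iA : Fin n) : ℕ) ≠ (jA : ℕ) := by
    intro h
    have e : w iA = jA := Fin.ext h
    have e2 : iA = w.symm jA := by rw [← e, Equiv.symm_apply_apply]
    rw [e2] at hiA
    omega
  have hne2 : ((w.symm jB : Fin n) : ℕ) ≠ (iB : ℕ) := by
    intro h
    have e : w.symm jB = iB := Fin.ext h
    have e2 : jB = w iB := by rw [← e, Equiv.apply_symm_apply]
    have : (jB : ℕ) = ((w iB : Fin n) : ℕ) := by rw [e2]
    omega
  refine ⟨w.symm jA, iA, iB, w.symm jB, ?_, ?_, ?_, ?_, ?_, ?_⟩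
  · rw [Fin.lt_def]; omega
  · rw [Fin.lt_def]; omega
  · rw [Fin.lt_def]; omega
  · rw [Fin.lt_def, Equiv.apply_symm_apply]; omega
  · rw [Fin.lt_def, Equiv.apply_symm_apply, Equiv.apply_symm_apply]; omega
  · rw [Fin.lt_def, Equiv.apply_symm_apply]; omega

/-- Climbing from a box to an essential box weakly southeast of it, preserving rank. -/
lemma climb : ∀ (m x y : ℕ) (_ : x < n) (_ : y < n), 2 * n ≤ x + y + m → BoxP w x y →
    ∃ e f : Fin n, x ≤ (e : ℕ) ∧ y ≤ (f : ℕ) ∧ InEssentialSet w e f ∧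
      rk w ((e : ℕ) + 1) ((f : ℕ) + 1) = rk w (x + 1) (y + 1) := by
  intro m
  induction m with
  | zero => intro x y hx hy hsum _; omega
  | succ m ih =>
    intro x y hx hy hsum hbox
    obtain ⟨hb1, hb2⟩ := (boxP_iff w hx hy).mp hbox
    have hwx : ((w ⟨x, hx⟩ : Fin n) : ℕ) < n := (w ⟨x, hx⟩).isLt
    have hwy : ((w.symm ⟨y, hy⟩ : Fin n) : ℕ) < n := (w.symm ⟨y, hy⟩).isLt
    have hx1 : x + 1 < n := by omega
    have hy1 : y + 1 < n := by omega
    by_cases hA : ((w ⟨x + 1, hx1⟩ : Fin n) : ℕ) ≤ y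
    · by_cases hB : ((w.symm ⟨y + 1, hy1⟩ : Fin n) : ℕ) ≤ x
      · exact ⟨⟨x, hx⟩, ⟨y, hy⟩, le_refl _, le_refl _, ⟨hx1, hy1, hb1, hA, hb2, hB⟩, rfl⟩
      · push_neg at hB
        have hne : ((w ⟨x, hx⟩ : Fin n) : ℕ) ≠ y + 1 := by
          intro h
          have e : w ⟨x, hx⟩ = ⟨y + 1, hy1⟩ := Fin.ext h
          have e2 : (⟨x, hx⟩ : Fin n) = w.symm ⟨y + 1, hy1⟩ := by
            rw [← e, Equiv.symm_apply_apply]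
          have : x = ((w.symm ⟨y + 1, hy1⟩ : Fin n) : ℕ) := by rw [← e2]
          omega
        have hbox' : BoxP w x (y + 1) := (boxP_iff w hx hy1).mpr ⟨by omega, hB⟩
        obtain ⟨e, f, he, hf, hessef, hrk⟩ := ih x (y + 1) hx hy1 (by omega) hbox'
        refine ⟨e, f, he, by omega, hessef, ?_⟩
        rw [hrk, rk_succ_right w hy1 (x + 1), if_neg (by omega)]
        omega
    · push_neg at hA
      have hne : ((w.symm ⟨y, hy⟩ : Fin n) : ℕ) ≠ x + 1 := by
        intro h
        have e : w.symm ⟨y, hy⟩ = ⟨x + 1, hx1⟩ := Fin.ext h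
        have e2 : (⟨y, hy⟩ : Fin n) = w ⟨x + 1, hx1⟩ := by
          rw [← e, Equiv.apply_symm_apply]
        have : y = ((w ⟨x + 1, hx1⟩ : Fin n) : ℕ) := by rw [← e2]
        omega
      have hbox' : BoxP w (x + 1) y := (boxP_iff w hx1 hy).mpr ⟨hA, by omega⟩
      obtain ⟨e, f, he, hf, hessef, hrk⟩ := ih (x + 1) y hx1 hy (by omega) hbox'
      refine ⟨e, f, by omega, hf, hessef, ?_⟩
      rw [hrk, rk_succ_left w hx1 (y + 1), if_neg (by omega)]
      omega

/-- Lower bound: the number of boxes on the diagonal up to `t0` is at least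
`t0 - rk`. -/
lemma lowerAux (u v : ℕ) (huv : u = 0 ∨ v = 0) :
    ∀ t0, t0 + u ≤ n → t0 + v ≤ n →
      t0 ≤ rk w (t0 + u) (t0 + v) +
        ((Finset.range t0).filter fun t => BoxP w (t + u) (t + v)).card := by
  intro t0
  induction t0 with
  | zero => intro _ _; exact Nat.zero_le _
  | succ t0 ih =>
    intro h1 h2
    have ih' := ih (by omega) (by omega)
    have e1 : t0 + 1 + u = (t0 + u) + 1 := by omega
    have e2 : t0 + 1 + v = (t0 + v) + 1 := by omega
    rw [e1, e2, Finset.range_add_one, Finset.filter_insert]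
    rcases step_tri w (t0 + u) (t0 + v) (by omega) (by omega) with
      ⟨hbox, hstep⟩ | ⟨hanti, hstep⟩ | ⟨hnbox, hstep⟩
    · rw [if_pos hbox, Finset.card_insert_of_notMem (by simp)]
      omega
    · rw [if_neg (fun h => box_not_anti w h hanti)]
      omega
    · rw [if_neg hnbox]
      omega

/-- Upper bound machinery: if all partial heights are bounded by `B` and
(vexillarity) no antibox occurs before a box, then the number of boxes on the
diagonal is at most `B`. -/
lemma upperAux (u v B : ℕ) (huv : u = 0 ∨ v = 0)
    (hnab : ∀ s t : ℕ, s < t → AntiP w (s + u) (s + v) → BoxP w (t + u) (t + v) → False)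
    (hb : ∀ t, t + u ≤ n → t + v ≤ n → t ≤ rk w (t + u) (t + v) + B) :
    ∀ t0, t0 + u ≤ n → t0 + v ≤ n →
      ((Finset.range t0).filter fun t => BoxP w (t + u) (t + v)).card ≤ B ∧
      ((∀ s < t0, ¬ AntiP w (s + u) (s + v)) →
        ((Finset.range t0).filter fun t => BoxP w (t + u) (t + v)).card
          + rk w (t0 + u) (t0 + v) = t0) := by
  intro t0
  induction t0 with
  | zero =>
    intro _ _
    refine ⟨Nat.zero_le _, fun _ => ?_⟩
    simp [rk_zero w u v huv]
  | succ t0 ih =>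
    intro h1 h2
    obtain ⟨ihc, ihe⟩ := ih (by omega) (by omega)
    have e1 : t0 + 1 + u = (t0 + u) + 1 := by omega
    have e2 : t0 + 1 + v = (t0 + v) + 1 := by omega
    rw [e1, e2, Finset.range_add_one, Finset.filter_insert]
    rcases step_tri w (t0 + u) (t0 + v) (by omega) (by omega) with
      ⟨hbox, hstep⟩ | ⟨hanti, hstep⟩ | ⟨hnbox, hstep⟩
    · rw [if_pos hbox, Finset.card_insert_of_notMem (by simp)]
      have hnoanti : ∀ s < t0, ¬ AntiP w (s + u) (s + v) := by
        intro s hs ha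
        exact hnab s t0 hs ha hbox
      have heq := ihe hnoanti
      have hbt := hb (t0 + 1) h1 h2
      rw [e1, e2] at hbt
      constructor
      · omega
      · intro _; omega
    · rw [if_neg (fun h => box_not_anti w h hanti)]
      refine ⟨ihc, fun hno => ?_⟩
      exact absurd hanti (hno t0 (by omega))
    · rw [if_neg hnbox]
      refine ⟨ihc, fun hno => ?_⟩
      have heq := ihe (fun s hs => hno s (by omega))
      omega

/-- The boxes of `D(w)` on the diagonal `k = v - u`, counted along the walk. -/
lemma diag_card (u v : ℕ) (huv : u = 0 ∨ v = 0) :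
    ((Finset.range (n - max u v)).filter fun t => BoxP w (t + u) (t + v)).card =
    (Finset.univ.filter fun b : Fin n × Fin n =>
        ((b.2 : ℕ) < ((w b.1 : Fin n) : ℕ) ∧ (b.1 : ℕ) < ((w.symm b.2 : Fin n) : ℕ)) ∧
        (b.2 : ℤ) - (b.1 : ℤ) = (v : ℤ) - (u : ℤ)).card := by
  apply Finset.card_bij
    (i := fun t ht =>
      ((⟨t + u, by
          have := Finset.mem_range.mp (Finset.mem_filter.mp ht).1; omega⟩ : Fin n),
       (⟨t + v, by
          have := Finset.mem_range.mp (Finset.mem_filter.mp ht).1; omega⟩ : Fin n)))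
  · intro t ht
    have hbox := (Finset.mem_filter.mp ht).2
    have hR := Finset.mem_range.mp (Finset.mem_filter.mp ht).1
    have hu : t + u < n := by omega
    have hv : t + v < n := by omega
    obtain ⟨hb1, hb2⟩ := (boxP_iff w hu hv).mp hbox
    simp only [Finset.mem_filter, Finset.mem_univ, true_and]
    refine ⟨⟨hb1, hb2⟩, ?_⟩
    push_cast
    omega
  · intro t1 ht1 t2 ht2 heq
    have : t1 + u = t2 + u := congrArg (fun z : Fin n × Fin n => (z.1 : ℕ)) heq
    omega
  · intro b hb
    simp only [Finset.mem_filter, Finset.mem_univ, true_and] at hb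
    obtain ⟨⟨hb1, hb2⟩, hbd⟩ := hb
    have hu : u ≤ (b.1 : ℕ) := by
      rcases huv with rfl | rfl <;> omega
    have h1 : ((b.1 : ℕ) - u) + u = (b.1 : ℕ) := by omega
    have h2 : ((b.1 : ℕ) - u) + v = (b.2 : ℕ) := by omega
    refine ⟨(b.1 : ℕ) - u, ?_, ?_⟩
    · refine Finset.mem_filter.mpr ⟨Finset.mem_range.mpr ?_, ?_⟩
      · have := b.1.isLt
        have := b.2.isLt
        omega
      · rw [h1, h2]
        exact ⟨b.1, b.2, rfl, rfl, hb1, hb2⟩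
    · exact Prod.ext (Fin.ext h1) (Fin.ext h2)

/-- Reading off `λ_istar ≥ Q - R` from the diagonal count. -/
lemma lamA (lam : ℕ → ℕ) (hmono : ∀ i j : ℕ, 1 ≤ i → i ≤ j → lam j ≤ lam i)
    (P Q R istar : ℕ) (k : ℤ) (hk : k = (Q : ℤ) - (P : ℤ))
    (hRQ : R < Q) (hP : R + istar = P) (histar : 1 ≤ istar)
    (hcard : min P Q - R ≤ ((Finset.Icc 1 n).filter fun j : ℕ =>
      1 ≤ (j : ℤ) + k ∧ (j : ℤ) + k ≤ (lam j : ℤ)).card) :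
    Q - R ≤ lam istar := by
  subst hk
  by_contra hcon
  push_neg at hcon
  have hsub : ((Finset.Icc 1 n).filter fun j : ℕ =>
      1 ≤ (j : ℤ) + ((Q : ℤ) - (P : ℤ)) ∧ (j : ℤ) + ((Q : ℤ) - (P : ℤ)) ≤ (lam j : ℤ))
      ⊆ Finset.Icc (max 1 (P + 1 - Q)) (istar - 1) := by
    intro j hj
    simp only [Finset.mem_filter, Finset.mem_Icc] at hj ⊢
    obtain ⟨⟨hj1, hjn⟩, hk1, hk2⟩ := hj
    have hjlt : j < istar := by
      by_contra hge
      push_neg at hge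
      have hm := hmono istar j histar hge
      omega
    omega
  have hcc := Finset.card_le_card hsub
  rw [Nat.card_Icc] at hcc
  omega

/-- Reading off `λ_istar ≤ Q - R` from the diagonal count. -/
lemma lamB (lam : ℕ → ℕ) (hmono : ∀ i j : ℕ, 1 ≤ i → i ≤ j → lam j ≤ lam i)
    (P Q R istar : ℕ) (k : ℤ) (hk : k = (Q : ℤ) + 1 - (P : ℤ))
    (hRQ : R ≤ Q) (hP : R + istar = P) (histar : 1 ≤ istar) (hin : istar ≤ n)
    (hcard : ((Finset.Icc 1 n).filter fun j : ℕ =>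
      1 ≤ (j : ℤ) + k ∧ (j : ℤ) + k ≤ (lam j : ℤ)).card ≤ min P (Q + 1) - R - 1) :
    lam istar ≤ Q - R := by
  subst hk
  by_contra hcon
  push_neg at hcon
  have hsub : Finset.Icc (max 1 (P - Q)) istar
      ⊆ ((Finset.Icc 1 n).filter fun j : ℕ =>
        1 ≤ (j : ℤ) + ((Q : ℤ) + 1 - (P : ℤ)) ∧
          (j : ℤ) + ((Q : ℤ) + 1 - (P : ℤ)) ≤ (lam j : ℤ)) := by
    intro j hj
    simp only [Finset.mem_Icc] at hj
    have h1j : 1 ≤ j := by omega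
    have hm := hmono j istar h1j (by omega)
    simp only [Finset.mem_filter, Finset.mem_Icc]
    refine ⟨⟨by omega, by omega⟩, by omega, by omega⟩
  have hcc := Finset.card_le_card hsub
  rw [Nat.card_Icc] at hcc
  omega

end FlaggingAux

open FlaggingAux in
/-- if `w ∈ Sₙ` is vexillary, `λ = λ(w)` is its associated
partition (characterized by: the `k`-th diagonal of the Young diagram of `λ`
has as many boxes as the `k`-th diagonal of the diagram `D(w)`), and
`{(pᵢ, qᵢ)}_{i=1,…,d}` is a flagging set of `w`, then `λᵢ = qᵢ - pᵢ + i` for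
`i = 1, …, d`.  Boxes are in 1-based paper coordinates, `λ` is indexed by
positive integers. -/
theorem flagging_set_gives_partition {n d : ℕ} (w : Equiv.Perm (Fin n))
    (hvex : ¬ ∃ a b c d : Fin n, a < b ∧ b < c ∧ c < d ∧
        w b < w a ∧ w a < w d ∧ w d < w c)
    (lam : ℕ → ℕ)
    (hmono : ∀ i j : ℕ, 1 ≤ i → i ≤ j → lam j ≤ lam i)
    (hzero : ∀ i : ℕ, n < i → lam i = 0)
    (hdiag : ∀ k : ℤ,
      (((Finset.Icc 1 n).filter fun i : ℕ =>
          1 ≤ (i : ℤ) + k ∧ (i : ℤ) + k ≤ (lam i : ℤ)).card) =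
      ((Finset.univ.filter fun b : Fin n × Fin n =>
          ((b.2 : ℕ) < ((w b.1 : Fin n) : ℕ) ∧
            (b.1 : ℕ) < ((w.symm b.2 : Fin n) : ℕ)) ∧
          (b.2 : ℤ) - (b.1 : ℤ) = k).card))
    (p q : Fin d → ℕ)
    (hrange : ∀ i, 1 ≤ p i ∧ p i ≤ n ∧ 1 ≤ q i ∧ q i ≤ n)
    (hp : Monotone p) (hq : Antitone q)
    (hess : ∀ a b : Fin n, InEssentialSet w a b →
      ∃ i : Fin d, p i = (a : ℕ) + 1 ∧ q i = (b : ℕ) + 1)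
    (hflag : ∀ i : Fin d, (p i : ℤ) - rk w (p i) (q i) = (i : ℤ) + 1) :
    ∀ i : Fin d, (lam ((i : ℕ) + 1) : ℤ) = (q i : ℤ) - (p i : ℤ) + ((i : ℕ) + 1) := by
  intro i
  have hflagi := hflag i
  obtain ⟨hP1, hPn, hQ1, hQn⟩ := hrange i
  have hcast : ((i : Fin d) : ℤ) = ((i : ℕ) : ℤ) := by push_cast; rfl
  rw [hcast] at hflagi
  have hRP : rk w (p i) (q i) + ((i : ℕ) + 1) = p i := by omega
  have hRQ : rk w (p i) (q i) ≤ q i := rk_le_right w (p i) (q i)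
  -- LOWER BOUND : Q - R ≤ lam (i+1)
  have hlow : q i - rk w (p i) (q i) ≤ lam ((i : ℕ) + 1) := by
    rcases Nat.eq_or_lt_of_le hRQ with hEq | hRQ'
    · omega
    · have huv : (p i - q i = 0) ∨ (q i - p i = 0) := by omega
      have hL := lowerAux w (p i - q i) (q i - p i) huv (min (p i) (q i))
        (by omega) (by omega)
      have e1 : min (p i) (q i) + (p i - q i) = p i := by omega
      have e2 : min (p i) (q i) + (q i - p i) = q i := by omega
      rw [e1, e2] at hL
      have hsub := Finset.card_le_card (Finset.filter_subset_filter
        (fun t => BoxP w (t + (p i - q i)) (t + (q i - p i)))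
        (Finset.range_subset_range.mpr (show min (p i) (q i) ≤ n - max (p i - q i) (q i - p i) by
          omega)))
      have hbridge := diag_card w (p i - q i) (q i - p i) huv
      have hd := hdiag (((q i - p i : ℕ) : ℤ) - ((p i - q i : ℕ) : ℤ))
      apply lamA (n := n) lam hmono (p i) (q i) (rk w (p i) (q i)) ((i : ℕ) + 1)
        (((q i - p i : ℕ) : ℤ) - ((p i - q i : ℕ) : ℤ)) (by omega) hRQ' hRP (by omega)
      omega
  -- UPPER BOUND : lam (i+1) ≤ Q - R
  have hup : lam ((i : ℕ) + 1) ≤ q i - rk w (p i) (q i) := by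
    set u := p i - (q i + 1) with hudef
    set v := (q i + 1) - p i with hvdef
    set Bd := min (p i) (q i + 1) - rk w (p i) (q i) - 1 with hBdef
    have huv : u = 0 ∨ v = 0 := by omega
    have hBkey : u + Bd + 1 = (i : ℕ) + 1 := by omega
    have hBkey2 : v + Bd + 1 = q i - rk w (p i) (q i) + 1 := by omega
    have hnab : ∀ s t : ℕ, s < t → AntiP w (s + u) (s + v) → BoxP w (t + u) (t + v) →
        False := by
      intro s t hst ha hbx
      exact no_anti_box w hvex (by omega) (by omega) ha hbx
    have hb : ∀ t, t + u ≤ n → t + v ≤ n → t ≤ rk w (t + u) (t + v) + Bd := by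
      intro t
      induction t using Nat.strong_induction_on with
      | _ t ih =>
        intro ht1 ht2
        by_contra hcon
        push_neg at hcon
        have ht0 : t ≠ 0 := by omega
        obtain ⟨s, rfl⟩ : ∃ s, t = s + 1 := ⟨t - 1, by omega⟩
        have hs := ih s (by omega) (by omega) (by omega)
        have e1 : s + 1 + u = (s + u) + 1 := by omega
        have e2 : s + 1 + v = (s + v) + 1 := by omega
        rw [e1, e2] at hcon
        have hxu : s + u < n := by omega
        have hxv : s + v < n := by omega
        have hmono1 : rk w (s + u) (s + v) ≤ rk w ((s + u) + 1) ((s + v) + 1) :=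
          le_trans (rk_mono_left w _ (by omega)) (rk_mono_right w _ (by omega))
        obtain ⟨hbox, hst⟩ : BoxP w (s + u) (s + v) ∧
            rk w ((s + u) + 1) ((s + v) + 1) = rk w (s + u) (s + v) := by
          rcases step_tri w (s + u) (s + v) hxu hxv with
            ⟨hbox, hst⟩ | ⟨_, hst⟩ | ⟨_, hst⟩
          · exact ⟨hbox, hst⟩
          · omega
          · omega
        obtain ⟨e, f, hxe, hyf, hessef, hrkeq⟩ :=
          climb w (2 * n) (s + u) (s + v) hxu hxv (by omega) hbox
        obtain ⟨j, hpj, hqj⟩ := hess e f hessef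
        have hflagj := hflag j
        have hcastj : ((j : Fin d) : ℤ) = ((j : ℕ) : ℤ) := by push_cast; rfl
        rw [hcastj] at hflagj
        have hgj : rk w (p j) (q j) = rk w (s + u) (s + v) := by
          rw [hpj, hqj, hrkeq, hst]
        have hij : (i : ℕ) ≤ (j : ℕ) := by omega
        have hle : i ≤ j := by rwa [Fin.le_def]
        have hqle : q j ≤ q i := hq hle
        have hple : p i ≤ p j := hp hle
        have c1 : rk w (p i) (q j) ≤ rk w (p j) (q j) := rk_mono_left w _ hple
        have c2 : rk w (p i) (q i) ≤ rk w (p i) (q j) + (q i - q j) :=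
          rk_right_sub w _ hqle
        omega
    have hup1 := (upperAux w u v Bd huv hnab hb (n - max u v) (by omega) (by omega)).1
    have hbridge := diag_card w u v huv
    have hd := hdiag (((v : ℕ) : ℤ) - ((u : ℕ) : ℤ))
    apply lamB (n := n) lam hmono (p i) (q i) (rk w (p i) (q i)) ((i : ℕ) + 1)
      (((v : ℕ) : ℤ) - ((u : ℕ) : ℤ)) (by omega) hRQ hRP (by omega) (by omega)
    omega
  omega
end

section
/- Let R be a commutative ring containing β, and suppose the Segre series of E - F is defined by S(E-F; u) = (1 + βu⁻¹)⁻¹ · c(E-F;β)/c(E-F;-u) as a formal Laurent series, where c(E-F;t) = c(E;t)/c(F;t). Then for every m ∈ ℤ, S_m(E-F) = (∑_{p=0}^{rk F} (-1)^p c_p(F) S_{m-p}(E)) · c(F;β)⁻¹, where S_m(E) are the coefficients of S(E;u) := (1+βu⁻¹)⁻¹ c(E;β)/c(E;-u). -/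
namespace Segre

variable (R : Type*) [CommRing R]

/-- The ambient ring used to expand the Segre series
`S(E-F;u) = (1+βu⁻¹)⁻¹ c(E-F;β)/c(E-F;-u)`: since every negative power of `u`
occurs together with a power of `β`, the series lies in `R[[v,u]]` where
`v = βu⁻¹` (so `β = uv`).  Here `v = X 0` and `u = X 1`. -/
noncomputable def v : MvPowerSeries (Fin 2) R := MvPowerSeries.X 0
noncomputable def u : MvPowerSeries (Fin 2) R := MvPowerSeries.X 1

/-- The Chern polynomial `c(E;t) = ∑_{i=0}^{e} cᵢ(E) tⁱ` evaluated at
`t : R[[v,u]]`. -/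
noncomputable def cpoly (c : ℕ → R) (e : ℕ) (t : MvPowerSeries (Fin 2) R) :
    MvPowerSeries (Fin 2) R :=
  ∑ i ∈ Finset.range (e + 1), MvPowerSeries.C (σ := Fin 2) (R := R) (c i) * t ^ i

/-- The full Segre series `S(E-F;u) = (1+βu⁻¹)⁻¹ c(E;β)c(F;-u)/(c(E;-u)c(F;β))`
as an element of `R[[v,u]]`, `β = uv`:  it is
`c(E;uv)·c(F;-u)·((1+v)·c(E;-u)·c(F;uv))⁻¹`. -/
noncomputable def segreSeries (cE : ℕ → R) (e : ℕ) (cF : ℕ → R) (f : ℕ) :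
    MvPowerSeries (Fin 2) R :=
  (cpoly R cE e (u R * v R) * cpoly R cF f (-(u R))) *
    MvPowerSeries.invOfUnit
      ((1 + v R) * cpoly R cE e (-(u R)) * cpoly R cF f (u R * v R)) 1

/-- The Segre class `S_m(E-F)`, the coefficient of `u^m` in `S(E-F;u)`; it is a
power series in `β`, whose `β^k`-coefficient is the `v^k u^{m+k}`-coefficient
of the expanded series. -/
noncomputable def segreClass (cE : ℕ → R) (e : ℕ) (cF : ℕ → R) (f : ℕ)
    (m : ℤ) : PowerSeries R :=
  PowerSeries.mk fun k =>
    if 0 ≤ m + (k : ℤ) then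
      MvPowerSeries.coeff (R := R)
        (Finsupp.single (0 : Fin 2) k
          + Finsupp.single (1 : Fin 2) (m + (k : ℤ)).toNat)
        (segreSeries R cE e cF f)
    else 0

/-- `S_m(E)`, the Segre class of `E` alone (`F` trivial). -/
noncomputable def segreClassE (cE : ℕ → R) (e : ℕ) (m : ℤ) : PowerSeries R :=
  segreClass R cE e (fun i => if i = 0 then 1 else 0) 0 m

/-- `c(F;β) = ∑_{j=0}^{f} cⱼ(F) βʲ` as a power series in `β`. -/
noncomputable def chernAtBeta (cF : ℕ → R) (f : ℕ) : PowerSeries R :=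
  ∑ j ∈ Finset.range (f + 1), PowerSeries.C (R := R) (cF j) * PowerSeries.X ^ j

/-! ### Auxiliary material -/

lemma le_pair {j k n : ℕ} :
    (Finsupp.single (0:Fin 2) j + Finsupp.single 1 j
      ≤ Finsupp.single (0:Fin 2) k + Finsupp.single 1 n) ↔ j ≤ k ∧ j ≤ n := by
  rw [Finsupp.le_def]
  constructor
  · intro h
    refine ⟨?_, ?_⟩
    · have := h 0; simpa using this
    · have := h 1; simpa using this
  · rintro ⟨h1, h2⟩ i
    fin_cases i <;> simp [Finsupp.single_apply, h1, h2]

lemma le_single {j k n : ℕ} :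
    (Finsupp.single (1:Fin 2) j
      ≤ Finsupp.single (0:Fin 2) k + Finsupp.single 1 n) ↔ j ≤ n := by
  rw [Finsupp.le_def]
  constructor
  · intro h
    have := h 1; simpa using this
  · intro h i
    fin_cases i <;> simp [Finsupp.single_apply, h]

lemma monoUV (c : R) (j : ℕ) :
    MvPowerSeries.C (σ := Fin 2) (R := R) c * (u R * v R) ^ j
      = MvPowerSeries.monomial (R := R) (Finsupp.single 0 j + Finsupp.single 1 j) c := by
  rw [mul_pow, u, v, MvPowerSeries.X_pow_eq, MvPowerSeries.X_pow_eq,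
    MvPowerSeries.monomial_mul_monomial, ← MvPowerSeries.monomial_zero_eq_C_apply,
    MvPowerSeries.monomial_mul_monomial]
  rw [zero_add, add_comm (Finsupp.single (1 : Fin 2) j)]; simp

lemma monoU (c : R) (j : ℕ) :
    MvPowerSeries.C (σ := Fin 2) (R := R) c * (-(u R)) ^ j
      = MvPowerSeries.monomial (R := R) (Finsupp.single 1 j) ((-1) ^ j * c) := by
  have hm1 : (-1 : MvPowerSeries (Fin 2) R) ^ j
      = MvPowerSeries.C (σ := Fin 2) (R := R) ((-1 : R) ^ j) := by
    rw [map_pow, map_neg, map_one]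
  rw [neg_pow, hm1, u, MvPowerSeries.X_pow_eq, ← mul_assoc, ← map_mul,
    ← MvPowerSeries.monomial_zero_eq_C_apply, MvPowerSeries.monomial_mul_monomial,
    zero_add, mul_one]
  congr 1
  ring

noncomputable def diagCoeff (m : ℤ) : MvPowerSeries (Fin 2) R →+ PowerSeries R where
  toFun a := PowerSeries.mk fun k =>
    if 0 ≤ m + (k : ℤ) then
      MvPowerSeries.coeff (R := R)
        (Finsupp.single (0 : Fin 2) k
          + Finsupp.single (1 : Fin 2) (m + (k : ℤ)).toNat) a
    else 0
  map_zero' := by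
    ext k
    simp [PowerSeries.coeff_mk]
  map_add' a b := by
    ext k
    simp only [PowerSeries.coeff_mk, map_add]
    split <;> simp [PowerSeries.coeff_mk]

lemma diagCoeff_apply (m : ℤ) (a : MvPowerSeries (Fin 2) R) (k : ℕ) :
    PowerSeries.coeff (R := R) k (diagCoeff R m a) =
      if 0 ≤ m + (k : ℤ) then
        MvPowerSeries.coeff (R := R)
          (Finsupp.single (0 : Fin 2) k
            + Finsupp.single (1 : Fin 2) (m + (k : ℤ)).toNat) a
      else 0 := by
  simp [diagCoeff, PowerSeries.coeff_mk]

lemma diagCoeff_mul_monoUV (a : MvPowerSeries (Fin 2) R) (c : R) (j : ℕ) (m : ℤ) :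
    diagCoeff R m
        (a * MvPowerSeries.monomial (R := R) (Finsupp.single 0 j + Finsupp.single 1 j) c)
      = diagCoeff R m a * (PowerSeries.C (R := R) c * PowerSeries.X ^ j) := by
  ext k
  have hr : diagCoeff R m a * (PowerSeries.C (R := R) c * PowerSeries.X ^ j)
      = diagCoeff R m a * PowerSeries.X ^ j * PowerSeries.C (R := R) c := by ring
  rw [hr, PowerSeries.coeff_mul_C, PowerSeries.coeff_mul_X_pow', diagCoeff_apply]
  by_cases h0 : 0 ≤ m + (k : ℤ)
  · rw [if_pos h0]
    by_cases hjk : j ≤ k ∧ j ≤ (m + (k : ℤ)).toNat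
    · obtain ⟨h1, h2⟩ := hjk
      have hs : Finsupp.single (0:Fin 2) k + Finsupp.single 1 (m + (k:ℤ)).toNat
          = (Finsupp.single (0:Fin 2) (k-j)
              + Finsupp.single 1 ((m + (k:ℤ)).toNat - j))
            + (Finsupp.single (0:Fin 2) j + Finsupp.single 1 j) := by
        rw [add_add_add_comm, ← Finsupp.single_add, ← Finsupp.single_add,
          Nat.sub_add_cancel h1, Nat.sub_add_cancel h2]
      rw [hs, MvPowerSeries.coeff_add_mul_monomial, if_pos h1, diagCoeff_apply]
      have hc : ((k - j : ℕ) : ℤ) = (k : ℤ) - (j : ℤ) := Nat.cast_sub h1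
      have h0' : 0 ≤ m + ((k - j : ℕ) : ℤ) := by rw [hc]; omega
      rw [if_pos h0', hc]
      have hn : (m + ((k : ℤ) - (j : ℤ))).toNat = (m + (k : ℤ)).toNat - j := by omega
      rw [hn]
    · rw [MvPowerSeries.coeff_mul_monomial, if_neg (fun h => hjk (le_pair.mp h))]
      by_cases h1 : j ≤ k
      · rw [if_pos h1, diagCoeff_apply, if_neg (by omega), zero_mul]
      · rw [if_neg h1, zero_mul]
  · rw [if_neg h0]
    by_cases h1 : j ≤ k
    · rw [if_pos h1, diagCoeff_apply, if_neg (by omega), zero_mul]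
    · rw [if_neg h1, zero_mul]

lemma diagCoeff_mul_monoU (a : MvPowerSeries (Fin 2) R) (c : R) (j : ℕ) (m : ℤ) :
    diagCoeff R m (a * MvPowerSeries.monomial (R := R) (Finsupp.single 1 j) c)
      = PowerSeries.C (R := R) c * diagCoeff R (m - j) a := by
  ext k
  rw [PowerSeries.coeff_C_mul, diagCoeff_apply, diagCoeff_apply]
  by_cases h0 : 0 ≤ m + (k : ℤ)
  · rw [if_pos h0]
    by_cases h2 : j ≤ (m + (k : ℤ)).toNat
    · have hs : Finsupp.single (0:Fin 2) k + Finsupp.single 1 (m + (k:ℤ)).toNat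
          = (Finsupp.single (0:Fin 2) k
              + Finsupp.single 1 ((m + (k:ℤ)).toNat - j))
            + Finsupp.single (1:Fin 2) j := by
        rw [add_assoc, ← Finsupp.single_add, Nat.sub_add_cancel h2]
      rw [hs, MvPowerSeries.coeff_add_mul_monomial, if_pos (by omega : 0 ≤ m - j + (k:ℤ))]
      have : (m - (j:ℤ) + (k:ℤ)).toNat = (m + (k:ℤ)).toNat - j := by omega
      rw [this, mul_comm]
    · rw [MvPowerSeries.coeff_mul_monomial, if_neg (fun h => h2 (le_single.mp h)),
        if_neg (by omega), mul_zero]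
  · rw [if_neg h0, if_neg (by omega), mul_zero]

lemma diagCoeff_mul_cpolyUV (a : MvPowerSeries (Fin 2) R) (c : ℕ → R) (f : ℕ) (m : ℤ) :
    diagCoeff R m (a * cpoly R c f (u R * v R))
      = diagCoeff R m a * chernAtBeta R c f := by
  rw [cpoly, Finset.mul_sum, map_sum, chernAtBeta, Finset.mul_sum]
  refine Finset.sum_congr rfl fun j _ => ?_
  rw [monoUV, diagCoeff_mul_monoUV]

lemma diagCoeff_mul_cpolyU (a : MvPowerSeries (Fin 2) R) (c : ℕ → R) (f : ℕ) (m : ℤ) :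
    diagCoeff R m (a * cpoly R c f (-(u R)))
      = ∑ p ∈ Finset.range (f + 1),
          ((-1 : PowerSeries R) ^ p * PowerSeries.C (R := R) (c p)) * diagCoeff R (m - p) a := by
  rw [cpoly, Finset.mul_sum, map_sum]
  refine Finset.sum_congr rfl fun p _ => ?_
  rw [monoU, diagCoeff_mul_monoU, map_mul, map_pow, map_neg, map_one]

lemma cpoly_triv (t : MvPowerSeries (Fin 2) R) :
    cpoly R (fun i => if i = 0 then 1 else 0) 0 t = 1 := by
  simp [cpoly]

lemma constCoeff_cpoly (c : ℕ → R) (e : ℕ) (t : MvPowerSeries (Fin 2) R)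
    (ht : MvPowerSeries.constantCoeff (σ := Fin 2) (R := R) t = 0) :
    MvPowerSeries.constantCoeff (σ := Fin 2) (R := R) (cpoly R c e t) = c 0 := by
  rw [cpoly, map_sum, Finset.sum_eq_single 0]
  · simp
  · intro i _ hi
    rw [map_mul, map_pow, ht, zero_pow hi, mul_zero]
  · intro h
    simp at h

lemma constCoeff_uv : MvPowerSeries.constantCoeff (σ := Fin 2) (R := R) (u R * v R) = 0 := by
  simp [u, v]

lemma constCoeff_negu : MvPowerSeries.constantCoeff (σ := Fin 2) (R := R) (-(u R)) = 0 := by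
  simp [u]

lemma invOfUnit_mul_right (φ ψ : MvPowerSeries (Fin 2) R)
    (hφ : MvPowerSeries.constantCoeff (σ := Fin 2) (R := R) φ = 1)
    (hψ : MvPowerSeries.constantCoeff (σ := Fin 2) (R := R) ψ = 1) :
    MvPowerSeries.invOfUnit (φ * ψ) 1 * ψ = MvPowerSeries.invOfUnit φ 1 := by
  have h1 : (φ * ψ) * MvPowerSeries.invOfUnit (φ * ψ) 1 = 1 :=
    MvPowerSeries.mul_invOfUnit _ _ (by rw [map_mul, hφ, hψ, mul_one, Units.val_one])
  have h2 : φ * MvPowerSeries.invOfUnit φ 1 = 1 :=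
    MvPowerSeries.mul_invOfUnit _ _ (by rw [hφ, Units.val_one])
  set X := MvPowerSeries.invOfUnit (φ * ψ) 1
  set Y := MvPowerSeries.invOfUnit φ 1
  calc X * ψ = X * ψ * (φ * Y) := by rw [h2, mul_one]
    _ = (φ * ψ * X) * Y := by ring
    _ = Y := by rw [h1, one_mul]

lemma star_identity (cE : ℕ → R) (e : ℕ) (cF : ℕ → R) (f : ℕ)
    (hcE0 : cE 0 = 1) (hcF0 : cF 0 = 1) :
    segreSeries R cE e cF f * cpoly R cF f (u R * v R)
      = segreSeries R cE e (fun i => if i = 0 then 1 else 0) 0 * cpoly R cF f (-(u R)) := by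
  rw [segreSeries, segreSeries, cpoly_triv, cpoly_triv, mul_one, mul_one]
  have hW : MvPowerSeries.constantCoeff (σ := Fin 2) (R := R)
      ((1 + v R) * cpoly R cE e (-(u R))) = 1 := by
    rw [map_mul, map_add, map_one, constCoeff_cpoly R cE e _ (constCoeff_negu R), hcE0]
    simp [v]
  have hG : MvPowerSeries.constantCoeff (σ := Fin 2) (R := R) (cpoly R cF f (u R * v R)) = 1 := by
    rw [constCoeff_cpoly R cF f _ (constCoeff_uv R), hcF0]
  have key := invOfUnit_mul_right R ((1 + v R) * cpoly R cE e (-(u R)))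
    (cpoly R cF f (u R * v R)) hW hG
  set A := cpoly R cE e (u R * v R)
  set B := cpoly R cF f (-(u R))
  set D := cpoly R cE e (-(u R))
  set G := cpoly R cF f (u R * v R)
  calc A * B * MvPowerSeries.invOfUnit ((1 + v R) * D * G) 1 * G
      = A * (MvPowerSeries.invOfUnit ((1 + v R) * D * G) 1 * G) * B := by ring
    _ = A * MvPowerSeries.invOfUnit ((1 + v R) * D) 1 * B := by rw [key]

lemma constCoeff_chern (cF : ℕ → R) (f : ℕ) (hcF0 : cF 0 = 1) :
    PowerSeries.constantCoeff (R := R) (chernAtBeta R cF f) = 1 := by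
  rw [chernAtBeta, map_sum, Finset.sum_eq_single 0]
  · simp [hcF0]
  · intro i _ hi
    rw [map_mul, map_pow, PowerSeries.constantCoeff_X, zero_pow hi, mul_zero]
  · intro h
    simp at h

/-- identity (2.2):
`S_m(E-F) = (∑_{p=0}^{rk F} (-1)^p c_p(F) S_{m-p}(E)) · c(F;β)⁻¹`
for all `m ∈ ℤ`, where the Chern classes of `E` and `F` are `cE` and `cF`
(with `c₀ = 1`) and all classes are expanded as power series in `β`. -/
theorem segre_relation_2_2 (cE : ℕ → R) (e : ℕ) (cF : ℕ → R) (f : ℕ)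
    (hcE0 : cE 0 = 1) (hcF0 : cF 0 = 1) :
    ∀ m : ℤ,
      segreClass R cE e cF f m =
        (∑ p ∈ Finset.range (f + 1),
            ((-1 : PowerSeries R) ^ p * PowerSeries.C (R := R) (cF p))
              * segreClassE R cE e (m - p)) *
          PowerSeries.invOfUnit (chernAtBeta R cF f) 1 := by
  intro m
  have hseg : segreClass R cE e cF f m = diagCoeff R m (segreSeries R cE e cF f) := rfl
  have hsegE : ∀ p : ℕ, segreClassE R cE e (m - p)
      = diagCoeff R (m - p) (segreSeries R cE e (fun i => if i = 0 then 1 else 0) 0) :=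
    fun p => rfl
  have h1 := congrArg (diagCoeff R m) (star_identity R cE e cF f hcE0 hcF0)
  rw [diagCoeff_mul_cpolyUV, diagCoeff_mul_cpolyU] at h1
  have hchern : chernAtBeta R cF f * PowerSeries.invOfUnit (chernAtBeta R cF f) 1 = 1 :=
    PowerSeries.mul_invOfUnit _ _ (by rw [constCoeff_chern R cF f hcF0, Units.val_one])
  calc segreClass R cE e cF f m
      = segreClass R cE e cF f m *
          (chernAtBeta R cF f * PowerSeries.invOfUnit (chernAtBeta R cF f) 1) := by
        rw [hchern, mul_one]
    _ = (diagCoeff R m (segreSeries R cE e cF f) * chernAtBeta R cF f) *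
          PowerSeries.invOfUnit (chernAtBeta R cF f) 1 := by
        rw [← hseg]; ring
    _ = _ := by
        rw [h1]
        congr 1

end Segre
end
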